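/- Let k be an algebraically closed field of characteristic p > 0, let L be a finitely generated field over k of transcendence degree n, let r = 2s be an even integer with r ≤ n, and let x_1, ..., x_n ∈ L and b_1, ..., b_r ∈ L be such that dx_1, ..., dx_n form an L-basis of Ω_{L/k}. Then for all but finitely many t ∈ k, the elements t·x_2 − b_1, t·x_1 − b_2, t·x_4 − b_3, t·x_3 − b_4, ..., t·x_{2s} − b_{2s−1}, t·x_{2s−1} − b_{2s}, x_{r+1}, ..., x_n form a separating transcendence basis of L/k. -/

import Mathlib

open Polynomial Matrix

namespace SBPEvenAux

/-- The pairing map on indices: even `i ↦ i+1`, odd `i ↦ i-1`. -/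
def pairv (i : ℕ) : ℕ := if i % 2 = 0 then i + 1 else i - 1

lemma pairv_lt {s r i : ℕ} (hrs : r = 2 * s) (h : i < r) : pairv i < r := by
  unfold pairv; split <;> omega

lemma pairv_invol (i : ℕ) : pairv (pairv i) = i := by
  unfold pairv; split <;> split <;> omega

/-- The pairing permutation on `Fin r` (for `r = 2s`). -/
def pairPerm (s r : ℕ) (hrs : r = 2 * s) : Equiv.Perm (Fin r) :=
  Function.Involutive.toPerm (fun i => ⟨pairv i, pairv_lt hrs i.2⟩)
    (fun i => Fin.ext (pairv_invol i))

lemma pairPerm_apply (s r : ℕ) (hrs : r = 2 * s) (i : Fin r) :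
    ((pairPerm s r hrs i : Fin r) : ℕ) = pairv i := rfl

/-- The reindexing equivalence `Fin r ⊕ Fin (n-r) ≃ Fin n`. -/
def eRN (n r : ℕ) (hr : r ≤ n) : Fin r ⊕ Fin (n - r) ≃ Fin n :=
  finSumFinEquiv.trans (finCongr (Nat.add_sub_cancel' hr))

lemma eRN_inl (n r : ℕ) (hr : r ≤ n) (i : Fin r) :
    ((eRN n r hr (Sum.inl i) : Fin n) : ℕ) = (i : ℕ) := by
  simp [eRN]

lemma eRN_inr (n r : ℕ) (hr : r ≤ n) (j : Fin (n - r)) :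
    ((eRN n r hr (Sum.inr j) : Fin n) : ℕ) = r + (j : ℕ) := by
  simp [eRN]

variable {k L : Type*} [Field k] [Field L] [Algebra k L]

lemma main_aux (n r s : ℕ) (hrs : r = 2 * s) (hr : r ≤ n) (x b : ℕ → L)
    (bas : Module.Basis (Fin n) L (KaehlerDifferential k L))
    (hbas : ∀ i : Fin n, bas i = KaehlerDifferential.D k L (x i)) :
    ∃ P : Polynomial L, P ≠ 0 ∧ ∀ t : k, Polynomial.eval (algebraMap k L t) P ≠ 0 →
      ∃ bas' : Module.Basis (Fin n) L (KaehlerDifferential k L),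
        ∀ i : Fin n, bas' i = KaehlerDifferential.D k L
          (if (i : ℕ) < r then
            (if (i : ℕ) % 2 = 0 then algebraMap k L t * x ((i : ℕ) + 1) - b i
             else algebraMap k L t * x ((i : ℕ) - 1) - b i)
           else x i) := by
  rcases Nat.eq_zero_or_pos n with hn | hn
  · subst hn
    exact ⟨1, one_ne_zero, fun t _ => ⟨bas, fun i => i.elim0⟩⟩
  haveI : Nonempty (Fin n) := ⟨⟨0, hn⟩⟩
  set D := KaehlerDifferential.D k L with hD
  set σ := pairPerm s r hrs with hσ
  set e' := eRN n r hr with he'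
  set cL : Fin r → Fin n → L := fun i j => bas.repr (D (b i)) j with hcL
  set M₀ : Matrix (Fin r) (Fin r) L := fun i j => cL (σ i) (e' (Sum.inl j)) with hM₀
  set A : Matrix (Fin r) (Fin r) (Polynomial L) := (charmatrix M₀).submatrix σ id with hA
  set B : Matrix (Fin r) (Fin (n - r)) (Polynomial L) :=
    fun i j => -Polynomial.C (cL i (e' (Sum.inr j))) with hB
  set Nb : Matrix (Fin r ⊕ Fin (n - r)) (Fin r ⊕ Fin (n - r)) (Polynomial L) :=
    Matrix.fromBlocks A B 0 1 with hNb
  refine ⟨Nb.det, ?_, ?_⟩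
  · -- the determinant polynomial is nonzero
    rw [hNb, Matrix.det_fromBlocks_zero₂₁, Matrix.det_one, mul_one]
    have hAeq : A = σ.permMatrix (Polynomial L) * charmatrix M₀ :=
      (PEquiv.toMatrix_toPEquiv_mul σ (charmatrix M₀)).symm
    rw [hAeq, Matrix.det_mul, Matrix.det_permutation]
    have hmono : (charmatrix M₀).det ≠ 0 := (Matrix.charpoly_monic M₀).ne_zero
    rcases Int.units_eq_one_or (Equiv.Perm.sign σ) with h | h <;>
      simp [h, hmono]
  · intro t ht
    set t' := algebraMap k L t with ht'
    set Nt : Matrix (Fin n) (Fin n) L :=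
      (Nb.map (Polynomial.eval t')).submatrix e'.symm e'.symm with hNt
    have hdet : Nt.det ≠ 0 := by
      rw [hNt, Matrix.det_submatrix_equiv_self]
      have : (Nb.map (Polynomial.eval t')).det
          = Polynomial.eval t' Nb.det := by
        rw [← Polynomial.coe_evalRingHom, ← RingHom.mapMatrix_apply, ← RingHom.map_det]
      rw [this]
      exact ht
    -- the new elements
    set w : Fin n → KaehlerDifferential k L := fun i => D
      ((if (i : ℕ) < r then
        (if (i : ℕ) % 2 = 0 then t' * x ((i : ℕ) + 1) - b i
         else t' * x ((i : ℕ) - 1) - b i)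
       else x i)) with hw
    -- row computation
    have hrow : ∀ a : Fin r ⊕ Fin (n - r),
        bas.equivFun.symm (Nt (e' a)) = w (e' a) := by
      intro a
      rw [Module.Basis.equivFun_symm_apply]
      have hNta : ∀ j : Fin n, Nt (e' a) j
          = Polynomial.eval t' (Nb a (e'.symm j)) := by
        intro j
        simp [hNt, Matrix.submatrix_apply]
      simp_rw [hNta]
      rw [← Equiv.sum_comp e'
        (fun j => Polynomial.eval t' (Nb a (e'.symm j)) • bas j)]
      simp_rw [Equiv.symm_apply_apply]
      rcases a with i | j
      · -- first r rows
        rw [Fintype.sum_sum_type]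
        have hlt : ((e' (Sum.inl i) : Fin n) : ℕ) < r := by
          rw [he', eRN_inl]; exact i.2
        have hσσ : ∀ j : Fin r, σ (σ j) = j := fun j => Fin.ext (pairv_invol j)
        have hx : D (x (pairv i)) = bas (e' (Sum.inl (σ i))) := by
          rw [hbas (e' (Sum.inl (σ i)))]
          have hvx : ((e' (Sum.inl (σ i)) : Fin n) : ℕ) = pairv (i : ℕ) := by
            rw [he', eRN_inl, hσ]; rfl
          rw [hvx]
        have hvali : ((e' (Sum.inl i) : Fin n) : ℕ) = (i : ℕ) := by
          rw [he', eRN_inl]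
        have hwval : w (e' (Sum.inl i)) = t' • bas (e' (Sum.inl (σ i))) - D (b i) := by
          rw [hw]
          simp only [if_pos hlt, hvali]
          have hbranch : (if (i : ℕ) % 2 = 0 then t' * x ((i : ℕ) + 1) - b (i : ℕ)
              else t' * x ((i : ℕ) - 1) - b (i : ℕ)) = t' * x (pairv i) - b (i : ℕ) := by
            by_cases hpar : (i : ℕ) % 2 = 0 <;> simp [pairv, hpar]
          rw [hbranch, if_pos i.isLt, Derivation.map_sub]
          have : D (t' * x (pairv i)) = t' • D (x (pairv i)) := by
            rw [hD, Derivation.leibniz, ht', Derivation.map_algebraMap]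
            simp
          rw [this, hx]
        rw [hwval]
        have hAeval : ∀ j' : Fin r,
            Polynomial.eval t' (Nb (Sum.inl i) (Sum.inl j'))
            = (if σ i = j' then t' else 0) - cL i (e' (Sum.inl j')) := by
          intro j'
          rw [hNb, Matrix.fromBlocks_apply₁₁, hA, Matrix.submatrix_apply, id_eq, charmatrix_apply]
          have hM₀' : M₀ (σ i) j' = cL i (e' (Sum.inl j')) := by
            simp only [hM₀]
            rw [hσσ i]
          rw [hM₀']
          rcases eq_or_ne (σ i) j' with h | h
          · simp [h]
          · simp [Matrix.diagonal_apply_ne _ h, h]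
        have hBeval : ∀ j' : Fin (n - r),
            Polynomial.eval t' (Nb (Sum.inl i) (Sum.inr j'))
            = -cL i (e' (Sum.inr j')) := by
          intro j'
          rw [hNb, Matrix.fromBlocks_apply₁₂, hB]
          simp
        simp_rw [hAeval, hBeval, sub_smul, neg_smul, ite_smul, zero_smul]
        rw [Finset.sum_sub_distrib, Finset.sum_ite_eq Finset.univ (σ i)
          (fun j' => t' • bas (e' (Sum.inl j')))]
        simp only [Finset.mem_univ, if_true]
        have hsum : (∑ j' : Fin r, cL i (e' (Sum.inl j')) • bas (e' (Sum.inl j')))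
            + (∑ j' : Fin (n - r), cL i (e' (Sum.inr j')) • bas (e' (Sum.inr j')))
            = D (b i) := by
          rw [← Fintype.sum_sum_type (fun c => cL i (e' c) • bas (e' c))]
          rw [Equiv.sum_comp e' (fun j => cL i j • bas j)]
          exact bas.sum_repr (D (b i))
        rw [← hsum, Finset.sum_neg_distrib]
        abel
      · -- last n - r rows
        rw [Fintype.sum_sum_type]
        have hge : ¬ ((e' (Sum.inr j) : Fin n) : ℕ) < r := by
          rw [he', eRN_inr]; omega
        have hwval : w (e' (Sum.inr j)) = bas (e' (Sum.inr j)) := by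
          rw [hw]
          simp only [if_neg hge]
          exact (hbas (e' (Sum.inr j))).symm
        rw [hwval]
        have h21 : ∀ j' : Fin r,
            Polynomial.eval t' (Nb (Sum.inr j) (Sum.inl j')) = 0 := by
          intro j'; rw [hNb, Matrix.fromBlocks_apply₂₁]; simp
        have h22 : ∀ j' : Fin (n - r),
            Polynomial.eval t' (Nb (Sum.inr j) (Sum.inr j'))
            = if j = j' then 1 else 0 := by
          intro j'
          rw [hNb, Matrix.fromBlocks_apply₂₂, Matrix.one_apply]
          split <;> simp
        simp_rw [h21, h22, zero_smul, Finset.sum_const_zero, zero_add, ite_smul, zero_smul,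
          one_smul]
        rw [Finset.sum_ite_eq Finset.univ j (fun j' => bas (e' (Sum.inr j')))]
        simp
    have hrow' : ∀ i : Fin n, bas.equivFun.symm (Nt i) = w i := by
      intro i
      have := hrow (e'.symm i)
      rwa [Equiv.apply_symm_apply] at this
    -- linear independence
    have liM : LinearIndependent L (fun i => Nt i) :=
      Matrix.linearIndependent_rows_iff_isUnit.mpr
        ((Matrix.isUnit_iff_isUnit_det Nt).mpr (isUnit_iff_ne_zero.mpr hdet))
    have liw : LinearIndependent L w := by
      have := liM.map' bas.equivFun.symm.toLinearMap bas.equivFun.symm.ker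
      have heq : (bas.equivFun.symm.toLinearMap ∘ fun i => Nt i) = w := by
        funext i
        exact hrow' i
      rwa [heq] at this
    haveI : FiniteDimensional L (KaehlerDifferential k L) :=
      Module.Finite.of_basis bas
    have hcard : Fintype.card (Fin n) = Module.finrank L (KaehlerDifferential k L) :=
      (Module.finrank_eq_card_basis bas).symm
    refine ⟨basisOfLinearIndependentOfCardEqFinrank liw hcard, fun i => ?_⟩
    rw [coe_basisOfLinearIndependentOfCardEqFinrank]

end SBPEvenAux

/-- (`r` even case of Claim 3.5, valid in any characteristic `p > 0`.)
If `dx_1, …, dx_n` is an `L`-basis of `Ω_{L/k}`, `r = 2s ≤ n` and `b_1, …, b_r ∈ L`, then for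
all but finitely many `t ∈ k` the elements `t·x_2 − b_1, t·x_1 − b_2, …, t·x_{2s} − b_{2s−1},
t·x_{2s−1} − b_{2s}, x_{r+1}, …, x_n` form a separating transcendence basis of `L/k`. -/
theorem separating_basis_perturbation_even_rank
    (k L : Type*) [Field k] [IsAlgClosed k] [Field L] [Algebra k L]
    (p : ℕ) [Fact p.Prime] [CharP k p]
    (hLfg : (⊤ : IntermediateField k L).FG)
    (n r s : ℕ) (hrs : r = 2 * s) (hr : r ≤ n) (x b : ℕ → L)
    (hb : ∃ bas : Module.Basis (Fin n) L (KaehlerDifferential k L),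
      ∀ i : Fin n, bas i = KaehlerDifferential.D k L (x i)) :
    {t : k | ¬ ∃ bas : Module.Basis (Fin n) L (KaehlerDifferential k L),
      ∀ i : Fin n, bas i = KaehlerDifferential.D k L
        (if (i : ℕ) < r then
          (if (i : ℕ) % 2 = 0 then algebraMap k L t * x ((i : ℕ) + 1) - b i
           else algebraMap k L t * x ((i : ℕ) - 1) - b i)
         else x i)}.Finite := by
  obtain ⟨bas, hbas⟩ := hb
  obtain ⟨P, hP, hPt⟩ := SBPEvenAux.main_aux n r s hrs hr x b bas hbas
  apply Set.Finite.subset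
    (Set.Finite.preimage ((algebraMap k L).injective.injOn)
      (Polynomial.finite_setOf_isRoot hP))
  intro t ht
  simp only [Set.mem_setOf_eq] at ht
  by_contra hmem
  exact ht (hPt t (fun h => hmem h))
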